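/- Let R ⊆ k[[t]] be a k-subalgebra with 𝔪 = R ∩ t·k[[t]], conductor ideal 𝔠 = t^{c_R}·k[[t]] ⊆ R where c_R is minimal with this property, and let a_n = max(v(𝔪)\v(𝔪²)). Then 𝔠 ⊄ 𝔪² if and only if a_n ≥ c_R. -/

import Mathlib

open PowerSeries

/-- The maximal ideal `𝔪 = R ∩ t·k[[t]]` of a subalgebra `R ⊆ k[[t]]`, i.e. the
elements of `R` with zero constant coefficient (equivalently, positive order). -/
noncomputable def mIdeal {k : Type*} [Field k] (R : Subalgebra k (PowerSeries k)) : Ideal R :=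
  RingHom.ker ((constantCoeff : PowerSeries k →+* k).comp R.subtype)

/-- The set of valuations `v(I)` of the nonzero elements of an ideal `I ⊆ R ⊆ k[[t]]`.
(Note `f.order = n` with `n : ℕ` forces `f ≠ 0`, since the zero series has order `⊤`.) -/
def vset {k : Type*} [Field k] {R : Subalgebra k (PowerSeries k)} (I : Ideal R) : Set ℕ :=
  {n | ∃ f ∈ I, (f : PowerSeries k).order = (n : ℕ∞)}

lemma mem_mIdeal_iff {k : Type*} [Field k] {R : Subalgebra k (PowerSeries k)} (g : R) :
    g ∈ mIdeal R ↔ constantCoeff (g : PowerSeries k) = 0 := by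
  simp [mIdeal, RingHom.mem_ker]

lemma Xc_mem_mIdeal {k : Type*} [Field k] {R : Subalgebra k (PowerSeries k)} {c : ℕ}
    (hc1 : 1 ≤ c) (f : PowerSeries k) (hf : (X : PowerSeries k) ^ c * f ∈ R) :
    (⟨(X : PowerSeries k) ^ c * f, hf⟩ : R) ∈ mIdeal R := by
  rw [mem_mIdeal_iff]
  simp [constantCoeff_X, zero_pow (by omega : c ≠ 0)]

/-- Key approximation lemma: if `aₙ < c`, any element of `𝔪` of order at least `c` whose order
plus `d` is at least `2c` lies in `𝔪²`. -/
lemma conductor_aux {k : Type*} [Field k]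
    (R : Subalgebra k (PowerSeries k)) (c : ℕ) (hc1 : 1 ≤ c)
    (hcond : ∀ f : PowerSeries k, (X : PowerSeries k) ^ c * f ∈ R)
    (aₙ : ℕ) (han : IsGreatest (vset (mIdeal R) \ vset ((mIdeal R) ^ 2)) aₙ)
    (hlt : aₙ < c) :
    ∀ d : ℕ, ∀ r : R, r ∈ mIdeal R → (c : ℕ∞) ≤ (r : PowerSeries k).order →
      ((2 * c : ℕ) : ℕ∞) ≤ (r : PowerSeries k).order + (d : ℕ∞) → r ∈ (mIdeal R) ^ 2 := by
  intro d
  induction d with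
  | zero =>
    intro r hr hcr h2c
    rw [Nat.cast_zero, add_zero] at h2c
    -- r has order ≥ 2c, so r = (X^c * 1) * (X^c * u)
    have hdvd : (X : PowerSeries k) ^ (2 * c) ∣ (r : PowerSeries k) := by
      rw [PowerSeries.X_pow_dvd_iff]
      intro m hm
      exact PowerSeries.coeff_of_lt_order m (lt_of_lt_of_le (by exact_mod_cast hm) h2c)
    obtain ⟨u, hu⟩ := hdvd
    have key : (r : PowerSeries k) = ((X : PowerSeries k) ^ c * 1) * ((X : PowerSeries k) ^ c * u) := by
      rw [hu, two_mul, pow_add]; ring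
    have : r = (⟨(X : PowerSeries k) ^ c * 1, hcond 1⟩ : R) *
        (⟨(X : PowerSeries k) ^ c * u, hcond u⟩ : R) := by
      apply Subtype.ext
      exact key
    rw [this, pow_two]
    exact Ideal.mul_mem_mul (Xc_mem_mIdeal hc1 1 (hcond 1)) (Xc_mem_mIdeal hc1 u (hcond u))
  | succ d ih =>
    intro r hr hcr h2c
    by_cases hord : ((2 * c : ℕ) : ℕ∞) ≤ (r : PowerSeries k).order + (d : ℕ∞)
    · exact ih r hr hcr hord
    -- order is finite; call it n, with n ≥ c > aₙ
    cases ho : (r : PowerSeries k).order with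
    | top =>
      have : (r : PowerSeries k) = 0 := PowerSeries.order_eq_top.mp ho
      have : r = 0 := Subtype.ext this
      rw [this]; exact zero_mem _
    | coe n =>
      rw [ho] at hcr hord h2c
      have hcn : c ≤ n := by exact_mod_cast hcr
      -- n ∈ vset 𝔪
      have hn_m : n ∈ vset (mIdeal R) := ⟨r, hr, ho⟩
      -- n ∈ vset 𝔪² since n > aₙ
      have hn_sq : n ∈ vset ((mIdeal R) ^ 2) := by
        by_contra hcon
        have : n ≤ aₙ := han.2 ⟨hn_m, hcon⟩
        omega
      obtain ⟨h, hhsq, hho⟩ := hn_sq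
      have hhn : PowerSeries.coeff n (h : PowerSeries k) ≠ 0 :=
        (PowerSeries.order_eq_nat.mp hho).1
      set μ : k := PowerSeries.coeff n (r : PowerSeries k) / PowerSeries.coeff n (h : PowerSeries k) with hμ
      set r' : R := r - (algebraMap k R μ) * h with hr'
      have hμh_sq : (algebraMap k R μ) * h ∈ (mIdeal R) ^ 2 := Ideal.mul_mem_left _ _ hhsq
      have hμh_m : (algebraMap k R μ) * h ∈ mIdeal R :=
        Ideal.pow_le_self two_ne_zero hμh_sq
      have hr'm : r' ∈ mIdeal R := sub_mem hr hμh_m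
      -- coefficients of r'
      have hcoeff : ∀ i : ℕ, PowerSeries.coeff i (r' : PowerSeries k) =
          PowerSeries.coeff i (r : PowerSeries k) - μ * PowerSeries.coeff i (h : PowerSeries k) := by
        intro i
        have : (r' : PowerSeries k) = (r : PowerSeries k) - PowerSeries.C μ * (h : PowerSeries k) := by
          simp [hr', Subalgebra.coe_mul, PowerSeries.algebraMap_apply, Algebra.algebraMap_self,
            RingHom.id_apply]
        rw [this, map_sub, PowerSeries.coeff_C_mul]
      have hord' : ((n + 1 : ℕ) : ℕ∞) ≤ (r' : PowerSeries k).order := by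
        apply PowerSeries.nat_le_order
        intro i hi
        rw [hcoeff i]
        rcases lt_or_eq_of_le (Nat.lt_succ_iff.mp hi) with hi' | hi'
        · rw [PowerSeries.coeff_of_lt_order i (by rw [ho]; exact_mod_cast hi'),
            PowerSeries.coeff_of_lt_order i (by rw [hho]; exact_mod_cast hi')]
          ring
        · subst hi'
          rw [hμ, div_mul_cancel₀ _ hhn, sub_self]
      have hr'sq : r' ∈ (mIdeal R) ^ 2 := by
        apply ih r' hr'm
        · exact le_trans (by exact_mod_cast (by omega : c ≤ n + 1)) hord'
        · refine le_trans ?_ (add_le_add_left hord' (d : ℕ∞))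
          have h2cn : 2 * c ≤ n + (d + 1) := by exact_mod_cast h2c
          have : ((2 * c : ℕ) : ℕ∞) ≤ ((n + 1 + d : ℕ) : ℕ∞) := by
            exact_mod_cast (by omega : 2 * c ≤ n + 1 + d)
          refine le_trans this (le_of_eq ?_)
          push_cast
          ring
      have : r = r' + (algebraMap k R μ) * h := by rw [hr']; ring
      rw [this]
      exact add_mem hr'sq hμh_sq

/-- with `c_R` the conductor degree (least `c` with `t^c·k[[t]] ⊆ R`) and
`a_n = max(v(𝔪)\v(𝔪²))`, the conductor ideal `𝔠 = t^{c_R}·k[[t]]` is *not* contained in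
`𝔪²` if and only if `a_n ≥ c_R`. -/
theorem conductor_not_subset_sq_iff {k : Type*} [Field k]
    (R : Subalgebra k (PowerSeries k)) (c : ℕ) (hc1 : 1 ≤ c)
    (hcond : ∀ f : PowerSeries k, (X : PowerSeries k) ^ c * f ∈ R)
    (hleast : ∀ c' : ℕ, (∀ f : PowerSeries k, (X : PowerSeries k) ^ c' * f ∈ R) → c ≤ c')
    (aₙ : ℕ) (han : IsGreatest (vset (mIdeal R) \ vset ((mIdeal R) ^ 2)) aₙ) :
    (¬ ∀ f : PowerSeries k,
        (⟨(X : PowerSeries k) ^ c * f, hcond f⟩ : R) ∈ (mIdeal R) ^ 2) ↔ c ≤ aₙ := by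
  constructor
  · intro hnot
    by_contra hca
    push_neg at hca
    apply hnot
    intro f
    apply conductor_aux R c hc1 hcond aₙ han hca c
    · exact Xc_mem_mIdeal hc1 f (hcond f)
    · apply PowerSeries.nat_le_order
      intro i hi
      rw [PowerSeries.coeff_X_pow_mul']
      simp [Nat.not_le.mpr hi]
    · have h1 : ((c : ℕ) : ℕ∞) ≤ ((X : PowerSeries k) ^ c * f).order := by
        apply PowerSeries.nat_le_order
        intro i hi
        rw [PowerSeries.coeff_X_pow_mul']
        simp [Nat.not_le.mpr hi]
      calc ((2 * c : ℕ) : ℕ∞) = (c : ℕ∞) + (c : ℕ∞) := by push_cast; ring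
        _ ≤ ((X : PowerSeries k) ^ c * f).order + (c : ℕ∞) := add_le_add_left h1 _
  · intro hca hall
    have hmem := hall ((X : PowerSeries k) ^ (aₙ - c))
    have hXa : (X : PowerSeries k) ^ c * (X : PowerSeries k) ^ (aₙ - c) = (X : PowerSeries k) ^ aₙ := by
      rw [← pow_add]
      congr 1
      omega
    have : aₙ ∈ vset ((mIdeal R) ^ 2) := by
      refine ⟨_, hmem, ?_⟩
      show ((X : PowerSeries k) ^ c * (X : PowerSeries k) ^ (aₙ - c)).order = (aₙ : ℕ∞)
      rw [hXa, PowerSeries.order_X_pow]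
    exact han.1.2 this
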